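/- Let 1 ≤ p < ∞, p ≠ 2, and let 𝓑 ⊆ ℓᵖ be the closed linear span of {e_{2k} + e_{2k+1} : k ∈ ℕ} ∪ {e_{2k}, e_{2k+1} : k ∈ C} for a set C ⊆ ℕ. Then every atom of the subvector ordering of 𝓑 is either a nonzero scalar multiple of e_{2k} + e_{2k+1} for some k ∉ C, or a nonzero scalar multiple of e_{2k+j} for some k ∈ C and j ∈ {0,1}. -/

import Mathlib

open scoped ENNReal
open Filter

noncomputable section

abbrev ellp (p : ℝ≥0∞) := lp (fun _ : ℕ => ℂ) p

/-- the standard basis vector `e n` -/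
noncomputable def stdb (p : ℝ≥0∞) (n : ℕ) : ellp p := lp.single p n 1

/-- `f` and `g` are disjointly supported -/
def DisjSupp {p : ℝ≥0∞} (f g : ellp p) : Prop := ∀ n : ℕ, f n = 0 ∨ g n = 0

/-- the subvector relation: `f = g · χ_A` for some `A ⊆ ℕ` -/
def Subvec {p : ℝ≥0∞} (f g : ellp p) : Prop :=
  ∃ A : Set ℕ, ⇑f = A.indicator ⇑g

lemma stdb_apply (p : ℝ≥0∞) (n m : ℕ) : stdb p n m = if m = n then 1 else 0 := by
  by_cases h : m = n
  · subst h; simp [stdb, lp.single_apply_self]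
  · simp [stdb, lp.single_apply_ne p n _ h, h]

lemma continuous_eval (p : ℝ≥0∞) [Fact (1 ≤ p)] (n : ℕ) :
    Continuous fun f : ellp p => f n := by
  have hp : p ≠ 0 := (lt_of_lt_of_le zero_lt_one Fact.out).ne'
  refine (LipschitzWith.mk_one fun f g => ?_).continuous
  rw [dist_eq_norm, dist_eq_norm]
  calc ‖f n - g n‖ = ‖(f - g) n‖ := by rw [lp.coeFn_sub]; rfl
    _ ≤ ‖f - g‖ := lp.norm_apply_le_norm hp _ n

/-- the submodule of sequences equal on blocks outside `C` -/
def Smod (p : ℝ≥0∞) (C : Set ℕ) : Submodule ℂ (ellp p) where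
  carrier := {f | ∀ k ∉ C, f (2 * k) = f (2 * k + 1)}
  add_mem' := by
    intro a b ha hb k hk
    rw [lp.coeFn_add]
    simp only [Pi.add_apply, ha k hk, hb k hk]
  zero_mem' := by intro k hk; simp
  smul_mem' := by
    intro c a ha k hk
    rw [lp.coeFn_smul]
    simp only [Pi.smul_apply, ha k hk]

lemma mem_Smod_of_mem_B (p : ℝ≥0∞) [Fact (1 ≤ p)] (C : Set ℕ)
    (f : ellp p)
    (hf : f ∈ (Submodule.span ℂ
      ({f : ellp p | ∃ k : ℕ, f = stdb p (2 * k) + stdb p (2 * k + 1)} ∪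
       {f : ellp p | ∃ k ∈ C, f = stdb p (2 * k) ∨ f = stdb p (2 * k + 1)})).topologicalClosure) :
    ∀ k ∉ C, f (2 * k) = f (2 * k + 1) := by
  have hclosed : IsClosed ((Smod p C : Set (ellp p))) := by
    have : (Smod p C : Set (ellp p)) =
        ⋂ (k : ℕ) (_ : k ∉ C), {f : ellp p | f (2 * k) = f (2 * k + 1)} := by
      ext g; simp [Smod, Set.mem_iInter]; exact Iff.rfl
    rw [this]
    exact isClosed_iInter fun k => isClosed_iInter fun _ =>
      isClosed_eq (continuous_eval p _) (continuous_eval p _)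
  have hspan : Submodule.span ℂ
      ({f : ellp p | ∃ k : ℕ, f = stdb p (2 * k) + stdb p (2 * k + 1)} ∪
       {f : ellp p | ∃ k ∈ C, f = stdb p (2 * k) ∨ f = stdb p (2 * k + 1)}) ≤ Smod p C := by
    rw [Submodule.span_le]
    rintro g (⟨k, rfl⟩ | ⟨k, hkC, (rfl | rfl)⟩) <;> intro k' hk'
    · rw [lp.coeFn_add]
      simp only [Pi.add_apply]
      rw [stdb_apply, stdb_apply, stdb_apply, stdb_apply]
      by_cases h : k' = k
      · subst h; norm_num
      · rw [if_neg (by omega), if_neg (by omega), if_neg (by omega), if_neg (by omega)]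
    · have hkk : k' ≠ k := fun h => hk' (h ▸ hkC)
      rw [stdb_apply, stdb_apply, if_neg (by omega), if_neg (by omega)]
    · have hkk : k' ≠ k := fun h => hk' (h ▸ hkC)
      rw [stdb_apply, stdb_apply, if_neg (by omega), if_neg (by omega)]
  exact (Submodule.topologicalClosure_minimal _ hspan hclosed) hf

/-- classification of the atoms of the subvector ordering of the
subspace `𝓑` of `ℓᵖ` determined by `C`. -/
theorem stmt_19 (p : ℝ≥0∞) [Fact (1 ≤ p)] (hptop : p ≠ ∞) (hp2 : p ≠ 2)
    (C : Set ℕ)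
    (B : Submodule ℂ (ellp p))
    (hB : B = (Submodule.span ℂ
      ({f : ellp p | ∃ k : ℕ, f = stdb p (2 * k) + stdb p (2 * k + 1)} ∪
       {f : ellp p | ∃ k ∈ C, f = stdb p (2 * k) ∨ f = stdb p (2 * k + 1)})).topologicalClosure)
    (f : ellp p) (hfB : (f : ellp p) ∈ B) (hfnz : f ≠ 0)
    (hatom : ∀ g : ellp p, g ∈ B → Subvec g f → g = 0 ∨ g = f) :
    (∃ k : ℕ, k ∉ C ∧ ∃ a : ℂ, a ≠ 0 ∧
        f = a • (stdb p (2 * k) + stdb p (2 * k + 1))) ∨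
    (∃ k ∈ C, ∃ a : ℂ, a ≠ 0 ∧
        (f = a • stdb p (2 * k) ∨ f = a • stdb p (2 * k + 1))) := by
  obtain ⟨n₀, hn₀⟩ : ∃ n, f n ≠ 0 := by
    by_contra h
    push_neg at h
    exact hfnz (lp.eq_zero_iff_coeFn_eq_zero.2 (funext h))
  set k : ℕ := n₀ / 2 with hk
  have hn₀eq : n₀ = 2 * k ∨ n₀ = 2 * k + 1 := by omega
  have hprop : ∀ k' ∉ C, f (2 * k') = f (2 * k' + 1) :=
    mem_Smod_of_mem_B p C f (hB ▸ hfB)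
  by_cases hkC : k ∈ C
  · -- singleton case
    right
    set g : ellp p := f n₀ • stdb p n₀ with hg
    have hgcoe : ⇑g = (Set.indicator {n₀} ⇑f) := by
      funext m
      rw [hg, lp.coeFn_smul, Pi.smul_apply, stdb_apply]
      by_cases h : m = n₀
      · subst h; simp
      · simp [h, Set.indicator_of_notMem, Set.mem_singleton_iff, h]
    have hgB : g ∈ B := by
      rw [hB, hg]
      refine Submodule.smul_mem _ _ (Submodule.le_topologicalClosure _
        (Submodule.subset_span (Or.inr ⟨k, hkC, ?_⟩)))
      rcases hn₀eq with h | h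
      · exact Or.inl (by rw [h])
      · exact Or.inr (by rw [h])
    rcases hatom g hgB ⟨{n₀}, hgcoe⟩ with hz | hgf
    · exfalso
      apply hn₀
      have := congrFun (hz ▸ hgcoe) n₀
      rw [lp.coeFn_zero] at this
      simpa using this.symm
    · have hfg : f = f n₀ • stdb p n₀ := hgf.symm.trans hg
      rcases hn₀eq with h | h
      · refine ⟨k, hkC, f n₀, hn₀, Or.inl ?_⟩
        rw [h] at hfg ⊢; exact hfg
      · refine ⟨k, hkC, f n₀, hn₀, Or.inr ?_⟩
        rw [h] at hfg ⊢; exact hfg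
  · -- pair case
    left
    have heq : f (2 * k) = f (2 * k + 1) := hprop k hkC
    have ha : f (2 * k) ≠ 0 := by
      rcases hn₀eq with h | h
      · rwa [h] at hn₀
      · rw [heq]; rwa [h] at hn₀
    set g : ellp p := f (2 * k) • (stdb p (2 * k) + stdb p (2 * k + 1)) with hg
    have hgcoe : ⇑g = (Set.indicator {2 * k, 2 * k + 1} ⇑f) := by
      funext m
      rw [hg, lp.coeFn_smul, Pi.smul_apply, lp.coeFn_add, Pi.add_apply,
        stdb_apply, stdb_apply]
      by_cases h1 : m = 2 * k
      · subst h1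
        rw [if_pos rfl, if_neg (by omega), Set.indicator_of_mem (by simp)]
        simp
      · by_cases h2 : m = 2 * k + 1
        · subst h2
          rw [if_neg (by omega), if_pos rfl, Set.indicator_of_mem (by simp)]
          simp [heq]
        · rw [if_neg h1, if_neg h2, Set.indicator_of_notMem (by simp [h1, h2])]
          simp
    have hgB : g ∈ B := by
      rw [hB, hg]
      exact Submodule.smul_mem _ _ (Submodule.le_topologicalClosure _
        (Submodule.subset_span (Or.inl ⟨k, rfl⟩)))
    rcases hatom g hgB ⟨{2 * k, 2 * k + 1}, hgcoe⟩ with hz | hgf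
    · exfalso
      apply ha
      have := congrFun (hz ▸ hgcoe) (2 * k)
      rw [lp.coeFn_zero] at this
      have h2 : (Set.indicator {2 * k, 2 * k + 1} ⇑f) (2 * k) = 0 := this.symm
      rwa [Set.indicator_of_mem (by simp)] at h2
    · exact ⟨k, hkC, f (2 * k), ha, hgf.symm.trans hg⟩
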